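/- Let P = [[0, A],[B, 0]] be a real matrix with constant row sums a, where A is m×n and B is n×m. If λ is an eigenvalue of P other than ±a, then |λ| ≤ (1/2)·sqrt( (max_{i,j≤m} Σ_s |a_{is} − a_{js}|) · (max_{i,j≤n} Σ_s |b_{is} − b_{js}|) ). -/

import Mathlib

open Finset

lemma zero_sum_bound {n : ℕ} (c : Fin n → ℝ) (y : Fin n → ℂ) (hc : ∑ s, c s = 0)
    (D : ℝ) (hD : ∀ s t, ‖y s - y t‖ ≤ D) :
    ‖∑ s, (c s : ℂ) * y s‖ ≤ (∑ s, |c s|) / 2 * D := by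
  set cp : Fin n → ℝ := fun s => max (c s) 0 with hcp
  set cm : Fin n → ℝ := fun s => max (-c s) 0 with hcm
  have hcp0 : ∀ s, 0 ≤ cp s := fun s => le_max_right _ _
  have hcm0 : ∀ s, 0 ≤ cm s := fun s => le_max_right _ _
  have hsub : ∀ s, cp s - cm s = c s := by
    intro s; rcases le_total (c s) 0 with h | h
    · rw [hcp, hcm]; simp only [max_eq_right h, max_eq_left (by linarith : (0:ℝ) ≤ -c s)]; ring
    · rw [hcp, hcm]; simp only [max_eq_left h, max_eq_right (by linarith : -c s ≤ 0)]; ring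
  have habs : ∀ s, cp s + cm s = |c s| := by
    intro s; rcases le_total (c s) 0 with h | h
    · rw [abs_of_nonpos h, hcp, hcm]
      simp only [max_eq_right h, max_eq_left (by linarith : (0:ℝ) ≤ -c s)]; ring
    · rw [abs_of_nonneg h, hcp, hcm]
      simp only [max_eq_left h, max_eq_right (by linarith : -c s ≤ 0)]; ring
  set S : ℝ := ∑ s, cp s with hS
  have hS0 : 0 ≤ S := Finset.sum_nonneg fun s _ => hcp0 s
  have hSm : ∑ s, cm s = S := by
    have h : ∑ s, cp s - ∑ s, cm s = 0 := by
      rw [← Finset.sum_sub_distrib]; simpa [hsub] using hc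
    rw [hS]; linarith
  have h2S : ∑ s, |c s| = 2 * S := by
    calc ∑ s, |c s| = ∑ s, (cp s + cm s) := by simp [habs]
      _ = S + S := by rw [Finset.sum_add_distrib, hSm, ← hS]
      _ = 2 * S := by ring
  rcases eq_or_lt_of_le hS0 with hSz | hSpos
  · have hz : ∀ s, c s = 0 := by
      intro s
      have h1 : cp s = 0 :=
        le_antisymm (by
          have := Finset.single_le_sum (f := cp) (fun t _ => hcp0 t) (Finset.mem_univ s)
          rw [← hS, ← hSz] at this; linarith) (hcp0 s)
      have h2 : cm s = 0 :=
        le_antisymm (by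
          have := Finset.single_le_sum (f := cm) (fun t _ => hcm0 t) (Finset.mem_univ s)
          rw [hSm, ← hSz] at this; linarith) (hcm0 s)
      rw [← hsub s, h1, h2]; ring
    simp [hz, h2S, ← hSz]
  · have hne : Nonempty (Fin n) := by
      rcases Nat.eq_zero_or_pos n with h | h
      · subst h; rw [hS] at hSpos; simp at hSpos
      · exact ⟨⟨0, h⟩⟩
    obtain ⟨s0⟩ := hne
    have hD0 : 0 ≤ D := le_trans (by simp) (hD s0 s0)
    have expand : ∑ s, ∑ t, (cp s : ℂ) * (cm t : ℂ) * (y s - y t)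
        = (S : ℂ) * ∑ s, (c s : ℂ) * y s := by
      have e1 : ∑ s, ∑ t, (cp s : ℂ) * (cm t : ℂ) * (y s - y t)
          = (∑ s, (cp s : ℂ) * y s) * (∑ t, (cm t : ℂ))
            - (∑ s, (cp s : ℂ)) * (∑ t, (cm t : ℂ) * y t) := by
        rw [Finset.sum_mul_sum, Finset.sum_mul_sum, ← Finset.sum_sub_distrib]
        refine Finset.sum_congr rfl fun s _ => ?_
        rw [← Finset.sum_sub_distrib]
        exact Finset.sum_congr rfl fun t _ => by ring
      have e2 : (∑ t, (cm t : ℂ)) = (S : ℂ) := by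
        rw [← hSm]; push_cast; rfl
      have e3 : (∑ s, (cp s : ℂ)) = (S : ℂ) := by
        rw [hS]; push_cast; rfl
      rw [e1, e2, e3, mul_comm _ ((S:ℂ)), ← mul_sub, ← Finset.sum_sub_distrib]
      congr 1
      refine Finset.sum_congr rfl fun s _ => ?_
      rw [← sub_mul]
      congr 1
      push_cast [← hsub s]
      ring
    have hbound : ‖∑ s, ∑ t, (cp s : ℂ) * (cm t : ℂ) * (y s - y t)‖
        ≤ S * (S * D) := by
      have step1 : ‖∑ s, ∑ t, (cp s : ℂ) * (cm t : ℂ) * (y s - y t)‖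
          ≤ ∑ s, ∑ t, ‖(cp s : ℂ) * (cm t : ℂ) * (y s - y t)‖ := by
        exact (norm_sum_le _ _).trans (Finset.sum_le_sum fun s _ => norm_sum_le _ _)
      refine step1.trans ?_
      have step2 : ∀ s t : Fin n, ‖(cp s : ℂ) * (cm t : ℂ) * (y s - y t)‖
          ≤ cp s * (cm t * D) := by
        intro s t
        rw [norm_mul, norm_mul, Complex.norm_real, Complex.norm_real, Real.norm_eq_abs, Real.norm_eq_abs,
          abs_of_nonneg (hcp0 s), abs_of_nonneg (hcm0 t), mul_assoc]
        exact mul_le_mul_of_nonneg_left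
          (mul_le_mul_of_nonneg_left (hD s t) (hcm0 t)) (hcp0 s)
      calc ∑ s, ∑ t, ‖(cp s : ℂ) * (cm t : ℂ) * (y s - y t)‖
          ≤ ∑ s, ∑ t, cp s * (cm t * D) :=
            Finset.sum_le_sum fun s _ => Finset.sum_le_sum fun t _ => step2 s t
        _ = ∑ s, cp s * (S * D) := by
            refine Finset.sum_congr rfl fun s _ => ?_
            rw [← Finset.mul_sum, ← Finset.sum_mul, hSm]
        _ = S * (S * D) := by rw [← Finset.sum_mul, ← hS]
    rw [expand, norm_mul, Complex.norm_real, Real.norm_eq_abs, abs_of_nonneg hS0] at hbound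
    have hfin : ‖∑ s, (c s : ℂ) * y s‖ ≤ S * D :=
      le_of_mul_le_mul_left hbound hSpos
    rw [h2S]
    calc ‖∑ s, (c s : ℂ) * y s‖ ≤ S * D := hfin
      _ = 2 * S / 2 * D := by ring

/-- Bipartite Dobrushin-type eigenvalue bound: if `P = [[0, A], [B, 0]]` has
constant row sums `a` and `λ` is a (complex) eigenvalue of `P` other than `±a`,
then `|λ| ≤ (1/2)·√((max_{i,j} Σ_s |a_{is}-a_{js}|)·(max_{i,j} Σ_s |b_{is}-b_{js}|))`. -/
theorem stmt12 {m n : ℕ} (hm : 0 < m) (hn : 0 < n)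
    (A : Matrix (Fin m) (Fin n) ℝ) (B : Matrix (Fin n) (Fin m) ℝ) (a : ℝ)
    (hA : ∀ i, ∑ s, A i s = a) (hB : ∀ i, ∑ s, B i s = a)
    (lam : ℂ)
    (hlam : lam ∈ spectrum ℂ ((Matrix.fromBlocks 0 A B 0).map Complex.ofReal))
    (h1 : lam ≠ (a : ℂ)) (h2 : lam ≠ -(a : ℂ)) :
    ‖lam‖ ≤ (1 / 2) * Real.sqrt
      ((⨆ p : Fin m × Fin m, ∑ s, |A p.1 s - A p.2 s|) *
        (⨆ p : Fin n × Fin n, ∑ s, |B p.1 s - B p.2 s|)) := by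
  -- notation
  set M := (Matrix.fromBlocks 0 A B 0).map Complex.ofReal with hM
  -- eigenvector
  have hdet : (algebraMap ℂ (Matrix (Fin m ⊕ Fin n) (Fin m ⊕ Fin n) ℂ) lam - M).det = 0 := by
    rw [spectrum.mem_iff, Matrix.isUnit_iff_isUnit_det, isUnit_iff_ne_zero, not_not] at hlam
    exact hlam
  obtain ⟨v, hvne, hveq⟩ := Matrix.exists_mulVec_eq_zero_iff.mpr hdet
  have hMv : M.mulVec v = lam • v := by
    rw [Matrix.sub_mulVec, Algebra.algebraMap_eq_smul_one, Matrix.smul_mulVec,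
      Matrix.one_mulVec, sub_eq_zero] at hveq
    exact hveq.symm
  set x : Fin m → ℂ := fun i => v (Sum.inl i) with hx
  set y : Fin n → ℂ := fun j => v (Sum.inr j) with hy
  have eq1 : ∀ i, ∑ s, (A i s : ℂ) * y s = lam * x i := by
    intro i
    have := congrFun hMv (Sum.inl i)
    simpa [hM, Matrix.mulVec, dotProduct, Fintype.sum_sum_type,
      Matrix.fromBlocks_apply₁₁, Matrix.fromBlocks_apply₁₂, hx, hy] using this
  have eq2 : ∀ j, ∑ s, (B j s : ℂ) * x s = lam * y j := by
    intro j
    have := congrFun hMv (Sum.inr j)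
    simpa [hM, Matrix.mulVec, dotProduct, Fintype.sum_sum_type,
      Matrix.fromBlocks_apply₂₁, Matrix.fromBlocks_apply₂₂, hx, hy] using this
  -- trivial case lam = 0
  rcases eq_or_ne lam 0 with hl0 | hl0
  · rw [hl0, norm_zero]; positivity
  have hL : 0 < ‖lam‖ := by
    simpa [norm_pos_iff] using hl0
  set L := ‖lam‖ with hLdef
  have i0 : Fin m := ⟨0, hm⟩
  have j0 : Fin n := ⟨0, hn⟩
  haveI : Nonempty (Fin m) := ⟨i0⟩
  haveI : Nonempty (Fin n) := ⟨j0⟩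
  -- suprema
  set dA := ⨆ p : Fin m × Fin m, ∑ s, |A p.1 s - A p.2 s| with hdA
  set dB := ⨆ p : Fin n × Fin n, ∑ s, |B p.1 s - B p.2 s| with hdB
  set Dx := ⨆ p : Fin m × Fin m, ‖x p.1 - x p.2‖ with hDx
  set Dy := ⨆ p : Fin n × Fin n, ‖y p.1 - y p.2‖ with hDy
  have bddA : BddAbove (Set.range fun p : Fin m × Fin m => ∑ s, |A p.1 s - A p.2 s|) :=
    Set.Finite.bddAbove (Set.finite_range _)
  have bddB : BddAbove (Set.range fun p : Fin n × Fin n => ∑ s, |B p.1 s - B p.2 s|) :=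
    Set.Finite.bddAbove (Set.finite_range _)
  have bddX : BddAbove (Set.range fun p : Fin m × Fin m => ‖x p.1 - x p.2‖) :=
    Set.Finite.bddAbove (Set.finite_range _)
  have bddY : BddAbove (Set.range fun p : Fin n × Fin n => ‖y p.1 - y p.2‖) :=
    Set.Finite.bddAbove (Set.finite_range _)
  have hdAle : ∀ i j, ∑ s, |A i s - A j s| ≤ dA := fun i j =>
    le_ciSup bddA (⟨i, j⟩ : Fin m × Fin m)
  have hdBle : ∀ i j, ∑ s, |B i s - B j s| ≤ dB := fun i j =>
    le_ciSup bddB (⟨i, j⟩ : Fin n × Fin n)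
  have hDxle : ∀ i j, ‖x i - x j‖ ≤ Dx := fun i j =>
    le_ciSup bddX (⟨i, j⟩ : Fin m × Fin m)
  have hDyle : ∀ i j, ‖y i - y j‖ ≤ Dy := fun i j =>
    le_ciSup bddY (⟨i, j⟩ : Fin n × Fin n)
  have hdA0 : 0 ≤ dA := le_trans (by simp) (hdAle i0 i0)
  have hdB0 : 0 ≤ dB := le_trans (by simp) (hdBle j0 j0)
  have hDx0 : 0 ≤ Dx := le_trans (by simp) (hDxle i0 i0)
  have hDy0 : 0 ≤ Dy := le_trans (by simp) (hDyle j0 j0)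
  -- pointwise oscillation bounds
  have stepx : ∀ i j : Fin m, ‖lam * (x i - x j)‖ ≤ dA / 2 * Dy := by
    intro i j
    have hrw : lam * (x i - x j) = ∑ s, ((A i s - A j s : ℝ) : ℂ) * y s := by
      rw [mul_sub, ← eq1 i, ← eq1 j, ← Finset.sum_sub_distrib]
      refine Finset.sum_congr rfl fun s _ => ?_
      push_cast; ring
    rw [hrw]
    refine (zero_sum_bound (fun s => A i s - A j s) y ?_ Dy fun s t => hDyle s t).trans ?_
    · rw [Finset.sum_sub_distrib, hA i, hA j]; ring
    · gcongr
      exact hdAle i j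
  have stepy : ∀ i j : Fin n, ‖lam * (y i - y j)‖ ≤ dB / 2 * Dx := by
    intro i j
    have hrw : lam * (y i - y j) = ∑ s, ((B i s - B j s : ℝ) : ℂ) * x s := by
      rw [mul_sub, ← eq2 i, ← eq2 j, ← Finset.sum_sub_distrib]
      refine Finset.sum_congr rfl fun s _ => ?_
      push_cast; ring
    rw [hrw]
    refine (zero_sum_bound (fun s => B i s - B j s) x ?_ Dx fun s t => hDxle s t).trans ?_
    · rw [Finset.sum_sub_distrib, hB i, hB j]; ring
    · gcongr
      exact hdBle i j
  have keyx : L * Dx ≤ dA / 2 * Dy := by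
    have h : Dx ≤ (dA / 2 * Dy) / L := by
      refine ciSup_le fun p => ?_
      rw [le_div_iff₀ hL]
      calc ‖x p.1 - x p.2‖ * L = ‖lam * (x p.1 - x p.2)‖ := by
            rw [norm_mul]; ring
        _ ≤ dA / 2 * Dy := stepx p.1 p.2
    calc L * Dx ≤ L * ((dA / 2 * Dy) / L) := by
          exact mul_le_mul_of_nonneg_left h hL.le
      _ = dA / 2 * Dy := by field_simp
  have keyy : L * Dy ≤ dB / 2 * Dx := by
    have h : Dy ≤ (dB / 2 * Dx) / L := by
      refine ciSup_le fun p => ?_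
      rw [le_div_iff₀ hL]
      calc ‖y p.1 - y p.2‖ * L = ‖lam * (y p.1 - y p.2)‖ := by
            rw [norm_mul]; ring
        _ ≤ dB / 2 * Dx := stepy p.1 p.2
    calc L * Dy ≤ L * ((dB / 2 * Dx) / L) := by
          exact mul_le_mul_of_nonneg_left h hL.le
      _ = dB / 2 * Dx := by field_simp
  -- nondegeneracy
  have hAsum : ∀ i : Fin m, ∑ s, (A i s : ℂ) = (a : ℂ) := by
    intro i; rw [← hA i]; push_cast; rfl
  have hBsum : ∀ j : Fin n, ∑ s, (B j s : ℂ) = (a : ℂ) := by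
    intro j; rw [← hB j]; push_cast; rfl
  have hxc : (∀ i i' : Fin m, x i = x i') → False := by
    intro h
    have hyc : ∀ t, lam * y t = (a : ℂ) * x i0 := by
      intro t
      rw [← eq2 t]
      calc ∑ s, (B t s : ℂ) * x s = ∑ s, (B t s : ℂ) * x i0 :=
            Finset.sum_congr rfl fun s _ => by rw [h s i0]
        _ = (a : ℂ) * x i0 := by rw [← Finset.sum_mul, hBsum t]
    have hsq : lam * (lam * x i0) = (a : ℂ) * ((a : ℂ) * x i0) := by
      calc lam * (lam * x i0) = lam * (∑ s, (A i0 s : ℂ) * y s) := by rw [eq1 i0]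
        _ = ∑ s, (A i0 s : ℂ) * (lam * y s) := by
            rw [Finset.mul_sum]; exact Finset.sum_congr rfl fun s _ => by ring
        _ = ∑ s, (A i0 s : ℂ) * ((a : ℂ) * x i0) :=
            Finset.sum_congr rfl fun s _ => by rw [hyc s]
        _ = (a : ℂ) * ((a : ℂ) * x i0) := by rw [← Finset.sum_mul, hAsum i0]
    have hfac : (lam - (a : ℂ)) * (lam + (a : ℂ)) * x i0 = 0 := by
      linear_combination hsq
    have hc0 : x i0 = 0 := by
      rcases mul_eq_zero.mp hfac with h' | h'
      · rcases mul_eq_zero.mp h' with h'' | h''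
        · exact absurd (sub_eq_zero.mp h'') h1
        · exact absurd (eq_neg_of_add_eq_zero_left h'') h2
      · exact h'
    apply hvne
    funext i
    cases i with
    | inl i =>
        show v (Sum.inl i) = 0
        have : x i = 0 := by rw [h i i0, hc0]
        exact this
    | inr t =>
        show v (Sum.inr t) = 0
        have : lam * y t = 0 := by rw [hyc t, hc0, mul_zero]
        have := mul_eq_zero.mp this
        rcases this with h' | h'
        · exact absurd h' hl0
        · exact h'
  have hyc' : (∀ t t' : Fin n, y t = y t') → False := by
    intro h
    apply hxc
    intro i i'
    have he : lam * x i = lam * x i' := by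
      rw [← eq1 i, ← eq1 i']
      calc ∑ s, (A i s : ℂ) * y s = ∑ s, (A i s : ℂ) * y j0 :=
            Finset.sum_congr rfl fun s _ => by rw [h s j0]
        _ = (a : ℂ) * y j0 := by rw [← Finset.sum_mul, hAsum i]
        _ = ∑ s, (A i' s : ℂ) * y j0 := by rw [← Finset.sum_mul, hAsum i']
        _ = ∑ s, (A i' s : ℂ) * y s :=
            Finset.sum_congr rfl fun s _ => by rw [h s j0]
    exact mul_left_cancel₀ hl0 he
  have hDxpos : 0 < Dx := by
    rcases eq_or_lt_of_le hDx0 with h | h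
    · exfalso
      apply hxc
      intro i i'
      have hle := hDxle i i'
      rw [← h] at hle
      have h0 : ‖x i - x i'‖ = 0 := le_antisymm hle (norm_nonneg _)
      exact sub_eq_zero.mp (norm_eq_zero.mp h0)
    · exact h
  have hDypos : 0 < Dy := by
    rcases eq_or_lt_of_le hDy0 with h | h
    · exfalso
      apply hyc'
      intro t t'
      have hle := hDyle t t'
      rw [← h] at hle
      have h0 : ‖y t - y t'‖ = 0 := le_antisymm hle (norm_nonneg _)
      exact sub_eq_zero.mp (norm_eq_zero.mp h0)
    · exact h
  -- combine
  have hL2 : L ^ 2 ≤ dA * dB / 4 := by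
    have hmul : (L * Dx) * (L * Dy) ≤ (dA / 2 * Dy) * (dB / 2 * Dx) :=
      mul_le_mul keyx keyy (by positivity) (by positivity)
    nlinarith [mul_pos hDxpos hDypos]
  have hsq4 : dA * dB / 4 = (1 / 2 * Real.sqrt (dA * dB)) ^ 2 := by
    rw [mul_pow, Real.sq_sqrt (mul_nonneg hdA0 hdB0)]; ring
  calc L = Real.sqrt (L ^ 2) := (Real.sqrt_sq (norm_nonneg lam)).symm
    _ ≤ Real.sqrt ((1 / 2 * Real.sqrt (dA * dB)) ^ 2) :=
        Real.sqrt_le_sqrt (hsq4 ▸ hL2)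
    _ = 1 / 2 * Real.sqrt (dA * dB) := Real.sqrt_sq (by positivity)
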